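/- Let ν₂ ∈ (0,2), K>0, and define the operator 𝒜φ(x) = ½Δ(φρ)(x)/ρ(x) − ν₂²(K+|x|²)^{ν₂−1}φ(x) where ρ(x) = exp((K+|x|²)^{ν₂/2}). Then for any twice continuously differentiable φ:ℝᵈ→ℝ with compact support, ∫_{ℝᵈ} 𝒜φ(x)·φ(x)dx ≤ −½∫_{ℝᵈ}|∇φ(x)|²dx ≤ 0; that is, 𝒜 is dissipative on such functions. -/

import Mathlib

open Real MeasureTheory

/-- Partial derivative in the `i`-th coordinate direction. -/
noncomputable def pderiv' {d : ℕ} (f : EuclideanSpace ℝ (Fin d) → ℝ)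
    (x : EuclideanSpace ℝ (Fin d)) (i : Fin d) : ℝ :=
  fderiv ℝ f x (EuclideanSpace.single i 1)

/-- Laplacian: sum of second partial derivatives. -/
noncomputable def laplacian' {d : ℕ} (f : EuclideanSpace ℝ (Fin d) → ℝ)
    (x : EuclideanSpace ℝ (Fin d)) : ℝ :=
  ∑ i : Fin d, fderiv ℝ (fun y => pderiv' f y i) x (EuclideanSpace.single i 1)

namespace OpDiss

variable {d : ℕ} {ν₂ K : ℝ}

noncomputable def qf (K : ℝ) (x : EuclideanSpace ℝ (Fin d)) : ℝ := K + ‖x‖ ^ 2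

noncomputable def Ff (ν₂ K : ℝ) (x : EuclideanSpace ℝ (Fin d)) : ℝ := qf K x ^ (ν₂ / 2)

noncomputable def Gf (ν₂ K : ℝ) (x : EuclideanSpace ℝ (Fin d)) (i : Fin d) : ℝ :=
  ν₂ / 2 * qf K x ^ (ν₂ / 2 - 1) * (2 * x i)

noncomputable def Lf (ν₂ K : ℝ) (x : EuclideanSpace ℝ (Fin d)) :
    EuclideanSpace ℝ (Fin d) →L[ℝ] ℝ :=
  (ν₂ / 2 * qf K x ^ (ν₂ / 2 - 1)) • (2 • innerSL ℝ x)

lemma qf_pos (hK : 0 < K) (x : EuclideanSpace ℝ (Fin d)) : 0 < qf K x := by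
  have h : (0:ℝ) ≤ ‖x‖ ^ 2 := by positivity
  unfold qf; linarith

lemma hasFDerivAt_qf (x : EuclideanSpace ℝ (Fin d)) :
    HasFDerivAt (qf K (d := d)) (2 • innerSL ℝ x) x := by
  have h := (hasFDerivAt_id x).norm_sq
  show HasFDerivAt (fun x => K + ‖x‖ ^ 2) _ x
  simpa [qf] using h.const_add K

lemma hasFDerivAt_Ff (hK : 0 < K) (x : EuclideanSpace ℝ (Fin d)) :
    HasFDerivAt (Ff ν₂ K (d := d)) (Lf ν₂ K x) x :=
  (hasFDerivAt_qf x).rpow_const (Or.inl (qf_pos hK x).ne')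

lemma Lf_single (x : EuclideanSpace ℝ (Fin d)) (i : Fin d) :
    Lf ν₂ K x (EuclideanSpace.single i 1) = Gf ν₂ K x i := by
  have h : (innerSL ℝ x) (EuclideanSpace.single i 1) = x i := by
    simp [EuclideanSpace.inner_single_right]
  simp [Lf, Gf, h]

lemma contDiff_qf : ContDiff ℝ 2 (qf K (d := d)) :=
  contDiff_const.add (contDiff_norm_sq ℝ)

lemma contDiff_Ff (hK : 0 < K) : ContDiff ℝ 2 (Ff ν₂ K (d := d)) :=
  contDiff_qf.rpow_const_of_ne fun x => (qf_pos hK x).ne'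

lemma norm_sq_eq_sum (x : EuclideanSpace ℝ (Fin d)) : ‖x‖ ^ 2 = ∑ i, x i ^ 2 := by
  rw [EuclideanSpace.norm_eq, Real.sq_sqrt (by positivity)]
  simp [sq_abs]

end OpDiss

theorem operator_A_dissipative
    (d : ℕ) (ν₂ K : ℝ) (hν : ν₂ ∈ Set.Ioo (0:ℝ) 2) (hK : 0 < K)
    (φ : EuclideanSpace ℝ (Fin d) → ℝ)
    (hφ : ContDiff ℝ 2 φ) (hφc : HasCompactSupport φ) :
    let ρ : EuclideanSpace ℝ (Fin d) → ℝ :=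
      fun x => Real.exp ((K + ‖x‖ ^ 2) ^ (ν₂ / 2))
    let A : EuclideanSpace ℝ (Fin d) → ℝ :=
      fun x => (1 / 2) * laplacian' (fun y => φ y * ρ y) x / ρ x
        - ν₂ ^ 2 * (K + ‖x‖ ^ 2) ^ (ν₂ - 1) * φ x
    (∫ x, A x * φ x)
      ≤ -(1 / 2) * ∫ x, ∑ i : Fin d, (pderiv' φ x i) ^ 2
    ∧ (∫ x, A x * φ x) ≤ 0 := by
  intro ρ A
  open OpDiss in
  have he : ∀ i : Fin d, (EuclideanSpace.single i 1 : EuclideanSpace ℝ (Fin d)) =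
    EuclideanSpace.single i 1 := fun _ => rfl
  set ψ : EuclideanSpace ℝ (Fin d) → ℝ := fun x => Real.exp (-(Ff ν₂ K x)) with hψdef
  have hρeq : ρ = fun x => Real.exp (Ff ν₂ K x) := rfl
  have hψρ : ∀ x, ψ x * ρ x = 1 := by
    intro x
    show Real.exp _ * Real.exp _ = 1
    rw [← Real.exp_add]
    simp [Ff, qf]
  have hφd : Differentiable ℝ φ := hφ.differentiable two_ne_zero
  have hρd : ∀ x, HasFDerivAt ρ (ρ x • Lf ν₂ K x) x := fun x => (hasFDerivAt_Ff hK x).exp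
  have hψd : ∀ x, HasFDerivAt ψ ((-ψ x) • Lf ν₂ K x) x := by
    intro x
    have h := ((hasFDerivAt_Ff (ν₂ := ν₂) hK x).neg).exp
    have e : (-ψ x) • Lf ν₂ K x = Real.exp (-(Ff ν₂ K x)) • -Lf ν₂ K x := by
      ext v; simp [hψdef]
    rw [e]; exact h
  have hρc : ContDiff ℝ 2 ρ := Real.contDiff_exp.comp (contDiff_Ff hK)
  have hψc : ContDiff ℝ 2 ψ := Real.contDiff_exp.comp (contDiff_Ff hK).neg
  set g : EuclideanSpace ℝ (Fin d) → ℝ := fun y => φ y * ρ y with hgdef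
  set h : EuclideanSpace ℝ (Fin d) → ℝ := fun y => φ y * ψ y with hhdef
  have hgc : ContDiff ℝ 2 g := hφ.mul hρc
  have hhc : ContDiff ℝ 2 h := hφ.mul hψc
  have hgd : ∀ x, HasFDerivAt g (φ x • (ρ x • Lf ν₂ K x) + ρ x • fderiv ℝ φ x) x :=
    fun x => (hφd x).hasFDerivAt.mul (hρd x)
  have hhd : ∀ x, HasFDerivAt h (φ x • ((-ψ x) • Lf ν₂ K x) + ψ x • fderiv ℝ φ x) x :=
    fun x => (hφd x).hasFDerivAt.mul (hψd x)
  have hgval : ∀ x (i : Fin d), fderiv ℝ g x (EuclideanSpace.single i 1)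
      = ρ x * (pderiv' φ x i + φ x * Gf ν₂ K x i) := by
    intro x i
    rw [(hgd x).fderiv]
    simp [pderiv']
    rw [Lf_single]
    ring
  have hhval : ∀ x (i : Fin d), fderiv ℝ h x (EuclideanSpace.single i 1)
      = ψ x * (pderiv' φ x i - φ x * Gf ν₂ K x i) := by
    intro x i
    rw [(hhd x).fderiv]
    simp [pderiv']
    rw [Lf_single]
    ring
  set gi : Fin d → EuclideanSpace ℝ (Fin d) → ℝ := fun i y => pderiv' g y i with hgidef
  have hgic : ∀ i, ContDiff ℝ 1 (gi i) := by
    intro i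
    exact (hgc.fderiv_right (m := 1) (by norm_num)).clm_apply contDiff_const
  have hgidiff : ∀ i, Differentiable ℝ (gi i) := fun i => (hgic i).differentiable one_ne_zero
  have hφcont : Continuous φ := hφ.continuous
  have hψcont : Continuous ψ := hψc.continuous
  have hhcont : Continuous h := hhc.continuous
  have hacont : ∀ i, Continuous (fun x => pderiv' φ x i) := by
    intro i
    exact ((hφ.fderiv_right (m := 1) (by norm_num)).clm_apply contDiff_const).continuous
  have hgicont : ∀ i, Continuous (gi i) := fun i => (hgic i).continuous
  have hgi'cont : ∀ i, Continuous
      (fun x => fderiv ℝ (gi i) x (EuclideanSpace.single i 1)) := by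
    intro i
    exact (((hgic i).fderiv_right (m := 0) (by norm_num)).clm_apply contDiff_const).continuous
  have hh'cont : ∀ i, Continuous
      (fun x => fderiv ℝ h x (EuclideanSpace.single i 1)) := by
    intro i
    exact ((hhc.fderiv_right (m := 1) (by norm_num)).clm_apply contDiff_const).continuous
  have hhsupp : HasCompactSupport h := hφc.mul_right
  have hh'supp : ∀ i : Fin d, HasCompactSupport
      (fun x => fderiv ℝ h x (EuclideanSpace.single i 1)) :=
    fun i => hhsupp.fderiv_apply ℝ (EuclideanSpace.single i 1)
  have hasupp : ∀ i : Fin d, HasCompactSupport (fun x => pderiv' φ x i) :=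
    fun i => hφc.fderiv_apply ℝ (EuclideanSpace.single i 1)
  have I2 : ∀ i : Fin d,
      Integrable (fun x => h x * fderiv ℝ (gi i) x (EuclideanSpace.single i 1)) := fun i =>
    (hhcont.mul (hgi'cont i)).integrable_of_hasCompactSupport (hhsupp.mul_right)
  have key : ∀ i : Fin d, (∫ x, h x * fderiv ℝ (gi i) x (EuclideanSpace.single i 1)) =
      - ∫ x, (pderiv' φ x i ^ 2 - φ x ^ 2 * Gf ν₂ K x i ^ 2) := by
    intro i
    have I1 : Integrable (fun x => fderiv ℝ h x (EuclideanSpace.single i 1) * gi i x) :=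
      ((hh'cont i).mul (hgicont i)).integrable_of_hasCompactSupport ((hh'supp i).mul_right)
    have I3 : Integrable (fun x => h x * gi i x) :=
      (hhcont.mul (hgicont i)).integrable_of_hasCompactSupport (hhsupp.mul_right)
    rw [integral_mul_fderiv_eq_neg_fderiv_mul_of_integrable I1 (I2 i) I3
      (fun x _ => hhc.differentiable two_ne_zero x) (fun x _ => hgidiff i x)]
    congr 1
    apply integral_congr_ae
    filter_upwards with x
    have h1 : gi i x = ρ x * (pderiv' φ x i + φ x * Gf ν₂ K x i) := hgval x i
    have h2 : fderiv ℝ h x (EuclideanSpace.single i 1)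
      = ψ x * (pderiv' φ x i - φ x * Gf ν₂ K x i) := hhval x i
    rw [h1, h2]
    have h3 := hψρ x
    linear_combination (pderiv' φ x i ^ 2 - φ x ^ 2 * Gf ν₂ K x i ^ 2) * h3
  -- integrability of various compactly supported continuous functions
  have hφ2supp : HasCompactSupport (fun x => φ x ^ 2) :=
    hφc.comp_left (g := fun t : ℝ => t ^ 2) (by simp)
  have Ia : ∀ i : Fin d, Integrable (fun x => pderiv' φ x i ^ 2) := fun i =>
    ((continuous_pow 2).comp (hacont i)).integrable_of_hasCompactSupport
      ((hasupp i).comp_left (g := fun t : ℝ => t ^ 2) (by simp))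
  have hGcont : ∀ i : Fin d, Continuous (fun x => Gf ν₂ K x i) := by
    intro i
    apply Continuous.mul
    · exact continuous_const.mul
        ((OpDiss.contDiff_qf.continuous).rpow_const fun x => Or.inl (OpDiss.qf_pos hK x).ne')
    · exact continuous_const.mul (EuclideanSpace.proj (𝕜 := ℝ) i).continuous
  have IGf : ∀ i : Fin d, Integrable (fun x => φ x ^ 2 * Gf ν₂ K x i ^ 2) := fun i =>
    ((hφcont.pow 2).mul ((hGcont i).pow 2)).integrable_of_hasCompactSupport hφ2supp.mul_right
  have Isum : Integrable (fun x => ∑ i : Fin d, pderiv' φ x i ^ 2) :=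
    integrable_finset_sum _ fun i _ => Ia i
  have IG : Integrable (fun x => φ x ^ 2 * ∑ i : Fin d, Gf ν₂ K x i ^ 2) := by
    simp_rw [Finset.mul_sum]
    exact integrable_finset_sum _ fun i _ => IGf i
  have IQ : Integrable (fun x => ν₂ ^ 2 * OpDiss.qf K x ^ (ν₂ - 1) * φ x ^ 2) := by
    apply Continuous.integrable_of_hasCompactSupport
    · exact (continuous_const.mul
        ((OpDiss.contDiff_qf.continuous).rpow_const fun x => Or.inl (OpDiss.qf_pos hK x).ne')).mul
        (hφcont.pow 2)
    · exact hφ2supp.mul_left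
  -- the Laplacian term as a sum
  have hlapsum : ∀ x, h x * laplacian' g x
      = ∑ i : Fin d, h x * fderiv ℝ (gi i) x (EuclideanSpace.single i 1) := by
    intro x
    simp only [laplacian', Finset.mul_sum]
    rfl
  have Ilap : Integrable (fun x => h x * laplacian' g x) := by
    have : (fun x => h x * laplacian' g x)
        = fun x => ∑ i : Fin d, h x * fderiv ℝ (gi i) x (EuclideanSpace.single i 1) :=
      funext hlapsum
    rw [this]
    exact integrable_finset_sum _ fun i _ => I2 i
  -- value of the Laplacian integral
  have hlapval : (∫ x, h x * laplacian' g x)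
      = -(∫ x, ∑ i : Fin d, pderiv' φ x i ^ 2)
        + ∫ x, φ x ^ 2 * ∑ i : Fin d, Gf ν₂ K x i ^ 2 := by
    calc (∫ x, h x * laplacian' g x)
        = ∫ x, ∑ i : Fin d, h x * fderiv ℝ (gi i) x (EuclideanSpace.single i 1) := by
          exact integral_congr_ae (Filter.Eventually.of_forall hlapsum)
      _ = ∑ i : Fin d, ∫ x, h x * fderiv ℝ (gi i) x (EuclideanSpace.single i 1) :=
          integral_finset_sum _ fun i _ => I2 i
      _ = ∑ i : Fin d, (-(∫ x, pderiv' φ x i ^ 2) + ∫ x, φ x ^ 2 * Gf ν₂ K x i ^ 2) := by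
          refine Finset.sum_congr rfl fun i _ => ?_
          rw [key i, integral_sub (Ia i) (IGf i)]
          ring
      _ = -(∑ i : Fin d, ∫ x, pderiv' φ x i ^ 2)
          + ∑ i : Fin d, ∫ x, φ x ^ 2 * Gf ν₂ K x i ^ 2 := by
          rw [Finset.sum_add_distrib, ← Finset.sum_neg_distrib]
      _ = -(∫ x, ∑ i : Fin d, pderiv' φ x i ^ 2)
          + ∫ x, φ x ^ 2 * ∑ i : Fin d, Gf ν₂ K x i ^ 2 := by
          rw [← integral_finset_sum _ fun i _ => Ia i]
          congr 1
          rw [← integral_finset_sum _ fun i _ => IGf i]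
          exact integral_congr_ae (Filter.Eventually.of_forall fun x => by
            simp [Finset.mul_sum])
  -- pointwise formula for A x * φ x
  have hAφ : ∀ x, A x * φ x = (1 / 2) * (h x * laplacian' g x)
      - ν₂ ^ 2 * OpDiss.qf K x ^ (ν₂ - 1) * φ x ^ 2 := by
    intro x
    show ((1 / 2) * laplacian' g x / ρ x - ν₂ ^ 2 * (K + ‖x‖ ^ 2) ^ (ν₂ - 1) * φ x) * φ x = _
    have hinv : ψ x = (ρ x)⁻¹ := by
      rw [hρeq]
      simp [hψdef, Real.exp_neg]
    have : h x = φ x * ψ x := rfl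
    rw [this, hinv, div_eq_mul_inv]
    show _ = 1 / 2 * (φ x * (ρ x)⁻¹ * laplacian' g x) - ν₂ ^ 2 * (K + ‖x‖ ^ 2) ^ (ν₂ - 1) * φ x ^ 2
    ring
  -- split the main integral
  have hmain : (∫ x, A x * φ x)
      = -(1 / 2) * (∫ x, ∑ i : Fin d, pderiv' φ x i ^ 2)
        + ((1 / 2) * (∫ x, φ x ^ 2 * ∑ i : Fin d, Gf ν₂ K x i ^ 2)
          - ∫ x, ν₂ ^ 2 * OpDiss.qf K x ^ (ν₂ - 1) * φ x ^ 2) := by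
    calc (∫ x, A x * φ x)
        = ∫ x, ((1 / 2) * (h x * laplacian' g x)
            - ν₂ ^ 2 * OpDiss.qf K x ^ (ν₂ - 1) * φ x ^ 2) :=
          integral_congr_ae (Filter.Eventually.of_forall hAφ)
      _ = (1 / 2) * (∫ x, h x * laplacian' g x)
          - ∫ x, ν₂ ^ 2 * OpDiss.qf K x ^ (ν₂ - 1) * φ x ^ 2 := by
          rw [integral_sub (Ilap.const_mul _) IQ, integral_const_mul]
      _ = _ := by rw [hlapval]; ring
  -- the error term is nonpositive
  have hbracket : (1 / 2) * (∫ x, φ x ^ 2 * ∑ i : Fin d, Gf ν₂ K x i ^ 2)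
      - (∫ x, ν₂ ^ 2 * OpDiss.qf K x ^ (ν₂ - 1) * φ x ^ 2) ≤ 0 := by
    have hpt : ∀ x, (1 / 2) * (φ x ^ 2 * ∑ i : Fin d, Gf ν₂ K x i ^ 2)
        - ν₂ ^ 2 * OpDiss.qf K x ^ (ν₂ - 1) * φ x ^ 2 ≤ 0 := by
      intro x
      have hq := OpDiss.qf_pos hK x
      have hGsum : ∑ i : Fin d, Gf ν₂ K x i ^ 2
          = ν₂ ^ 2 * (OpDiss.qf K x ^ (ν₂ / 2 - 1)) ^ 2 * ‖x‖ ^ 2 := by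
        rw [OpDiss.norm_sq_eq_sum, Finset.mul_sum]
        refine Finset.sum_congr rfl fun i _ => ?_
        simp only [Gf]
        ring
      have hc2 : (OpDiss.qf K x ^ (ν₂ / 2 - 1)) ^ 2 = OpDiss.qf K x ^ (ν₂ - 2) := by
        rw [← Real.rpow_natCast (OpDiss.qf K x ^ (ν₂ / 2 - 1)) 2, ← Real.rpow_mul hq.le]
        norm_num
        congr 1
        ring
      have hxq : ‖x‖ ^ 2 ≤ OpDiss.qf K x := by
        simp only [OpDiss.qf]
        linarith
      have hb : OpDiss.qf K x ^ (ν₂ - 2) * ‖x‖ ^ 2 ≤ OpDiss.qf K x ^ (ν₂ - 1) := by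
        have h1 : OpDiss.qf K x ^ (ν₂ - 2) * ‖x‖ ^ 2
            ≤ OpDiss.qf K x ^ (ν₂ - 2) * OpDiss.qf K x :=
          mul_le_mul_of_nonneg_left hxq (Real.rpow_nonneg hq.le _)
        have h2 : OpDiss.qf K x ^ (ν₂ - 2) * OpDiss.qf K x = OpDiss.qf K x ^ (ν₂ - 1) := by
          nth_rewrite 2 [← Real.rpow_one (OpDiss.qf K x)]
          rw [← Real.rpow_add hq]
          congr 1
          ring
        linarith
      rw [hGsum, hc2]
      have hB : 0 ≤ OpDiss.qf K x ^ (ν₂ - 1) := Real.rpow_nonneg hq.le _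
      nlinarith [mul_le_mul_of_nonneg_left hb
        (by positivity : (0:ℝ) ≤ φ x ^ 2 * ν₂ ^ 2), sq_nonneg (φ x), sq_nonneg ν₂,
        mul_nonneg (mul_nonneg (sq_nonneg (φ x)) (sq_nonneg ν₂)) hB]
    calc (1 / 2) * (∫ x, φ x ^ 2 * ∑ i : Fin d, Gf ν₂ K x i ^ 2)
        - (∫ x, ν₂ ^ 2 * OpDiss.qf K x ^ (ν₂ - 1) * φ x ^ 2)
        = ∫ x, ((1 / 2) * (φ x ^ 2 * ∑ i : Fin d, Gf ν₂ K x i ^ 2)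
            - ν₂ ^ 2 * OpDiss.qf K x ^ (ν₂ - 1) * φ x ^ 2) := by
          rw [integral_sub (IG.const_mul _) IQ, integral_const_mul]
      _ ≤ 0 := integral_nonpos hpt
  have hS : 0 ≤ ∫ x, ∑ i : Fin d, pderiv' φ x i ^ 2 :=
    integral_nonneg fun x => Finset.sum_nonneg fun i _ => sq_nonneg _
  constructor
  · rw [hmain]
    linarith
  · rw [hmain]
    nlinarith
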